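/- Let p ≥ 1, B₁ < B₂ reals, B = [B₁,B₂]^p ⊆ ℝ^p, and let W : ℝ^p → ℝ be differentiable and σ-strongly concave on B with σ > 0, with sup_{β∈B} max_{1≤i≤p} |∂W/∂β_i(β)| ≤ G, and let β* ∈ B be a maximizer of W over B. Fix constants M ≥ η ≥ 1/σ and define iterates β₁ ∈ B and β_{w+1} = P(β_w + (η/(w+1)) ∇W(β_w)), where P is the coordinatewise projection onto B, and set L = max{2(B₂−B₁)², G² M²}. Assume additionally that there is a constant C̄ ≥ 0 with W(β*) − W(β) ≤ C̄ ‖β − β*‖² for all β ∈ B. Then for every integer T ≥ 1, the cumulative (in-sample) regret satisfies Σ_{w=1}^T (W(β*) − W(β_w)) ≤ C̄ · L · p · (1 + log T). -/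

import Mathlib

open Real

/-- The box `[B₁, B₂]^p` in `ℝ^p`. -/
def box (p : ℕ) (B₁ B₂ : ℝ) : Set (EuclideanSpace ℝ (Fin p)) :=
  {x | ∀ i, x i ∈ Set.Icc B₁ B₂}

/-- Coordinatewise projection onto the box `[B₁, B₂]^p`: `(P x) i = min B₂ (max B₁ (x i))`. -/
noncomputable def boxProj (p : ℕ) (B₁ B₂ : ℝ) (x : EuclideanSpace ℝ (Fin p)) :
    EuclideanSpace ℝ (Fin p) :=
  (WithLp.equiv 2 (Fin p → ℝ)).symm fun i => min B₂ (max B₁ (x i))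

/-- `W` is `σ`-strongly concave on `S`. -/
def PaperStrongConcaveOn {p : ℕ} (S : Set (EuclideanSpace ℝ (Fin p))) (σ : ℝ)
    (W : EuclideanSpace ℝ (Fin p) → ℝ) : Prop :=
  ∀ x ∈ S, ∀ y ∈ S, ∀ t ∈ Set.Icc (0 : ℝ) 1,
    t * W x + (1 - t) * W y + σ / 2 * t * (1 - t) * ‖x - y‖ ^ 2 ≤ W (t • x + (1 - t) • y)


open Real Filter Topology
open scoped InnerProductSpace

section Aux

variable {p : ℕ}

lemma clamp_lip (B₁ B₂ a b : ℝ) :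
    |min B₂ (max B₁ a) - min B₂ (max B₁ b)| ≤ |a - b| := by
  refine (abs_min_sub_min_le_max _ _ _ _).trans ?_
  simp only [sub_self, abs_zero]
  refine max_le (abs_nonneg _) ?_
  simpa using abs_max_sub_max_le_max B₁ a B₁ b

lemma boxProj_mem (B₁ B₂ : ℝ) (hB : B₁ ≤ B₂) (x : EuclideanSpace ℝ (Fin p)) :
    boxProj p B₁ B₂ x ∈ box p B₁ B₂ := by
  intro i
  constructor
  · exact le_min hB (le_max_left _ _)
  · exact min_le_left _ _

lemma boxProj_id (B₁ B₂ : ℝ) (x : EuclideanSpace ℝ (Fin p)) (hx : x ∈ box p B₁ B₂) :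
    boxProj p B₁ B₂ x = x := by
  ext i
  have h := hx i
  show min B₂ (max B₁ (x i)) = x i
  rw [max_eq_right h.1, min_eq_right h.2]

lemma boxProj_nonexpansive (B₁ B₂ : ℝ) (hB : B₁ ≤ B₂) (x y : EuclideanSpace ℝ (Fin p))
    (hy : y ∈ box p B₁ B₂) :
    ‖boxProj p B₁ B₂ x - y‖ ≤ ‖x - y‖ := by
  rw [EuclideanSpace.norm_eq, EuclideanSpace.norm_eq]
  apply Real.sqrt_le_sqrt
  apply Finset.sum_le_sum
  intro i _
  have h1 : (boxProj p B₁ B₂ x - y) i = min B₂ (max B₁ (x i)) - min B₂ (max B₁ (y i)) := by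
    have := hy i
    show min B₂ (max B₁ (x i)) - y i = _
    rw [max_eq_right this.1, min_eq_right this.2]
  have h2 : (x - y) i = x i - y i := rfl
  rw [h1, h2]
  rw [Real.norm_eq_abs, Real.norm_eq_abs]
  exact pow_le_pow_left₀ (abs_nonneg _) (clamp_lip B₁ B₂ (x i) (y i)) 2

lemma norm_sq_le_coord (x : EuclideanSpace ℝ (Fin p)) (c : ℝ) (h : ∀ i, |x i| ≤ c) :
    ‖x‖ ^ 2 ≤ p * c ^ 2 := by
  rw [EuclideanSpace.norm_eq, Real.sq_sqrt (Finset.sum_nonneg fun i _ => sq_nonneg _)]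
  calc ∑ i, ‖x i‖ ^ 2 ≤ ∑ _i : Fin p, c ^ 2 := by
        refine Finset.sum_le_sum fun i _ => ?_
        rw [Real.norm_eq_abs]
        exact pow_le_pow_left₀ (abs_nonneg _) (h i) 2
    _ = p * c ^ 2 := by simp [Finset.sum_const]

lemma box_convex (B₁ B₂ : ℝ) {x y : EuclideanSpace ℝ (Fin p)} (hx : x ∈ box p B₁ B₂)
    (hy : y ∈ box p B₁ B₂) {t : ℝ} (ht : t ∈ Set.Icc (0:ℝ) 1) :
    t • x + (1 - t) • y ∈ box p B₁ B₂ := by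
  intro i
  have : (t • x + (1 - t) • y) i = t * x i + (1 - t) * y i := rfl
  rw [this]
  exact (convex_Icc B₁ B₂) (hx i) (hy i) ht.1 (by linarith [ht.2]) (by ring)

lemma harm_le_log : ∀ T : ℕ, 1 ≤ T →
    ∑ w ∈ Finset.Icc 1 T, (1 : ℝ) / w ≤ 1 + Real.log T := by
  intro T hT
  induction T, hT using Nat.le_induction with
  | base => simp
  | succ n hn ih =>
    rw [Finset.sum_Icc_succ_top (by omega)]
    have hlog : Real.log n + 1 / (n + 1 : ℝ) ≤ Real.log (n + 1) := by
      have hn0 : (0:ℝ) < n := by exact_mod_cast hn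
      have h1 : Real.log ((n : ℝ) / (n + 1)) ≤ (n : ℝ) / (n + 1) - 1 :=
        Real.log_le_sub_one_of_pos (by positivity)
      rw [Real.log_div (by positivity) (by positivity)] at h1
      have : (n : ℝ) / (n + 1) - 1 = -(1 / (n + 1)) := by field_simp; ring
      rw [this] at h1
      linarith
    push_cast
    linarith

end Aux

lemma sc_grad {p : ℕ} {S : Set (EuclideanSpace ℝ (Fin p))} {σ : ℝ}
    {W : EuclideanSpace ℝ (Fin p) → ℝ} (hdiff : Differentiable ℝ W)
    (hconc : PaperStrongConcaveOn S σ W) {x y : EuclideanSpace ℝ (Fin p)}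
    (hx : x ∈ S) (hy : y ∈ S) :
    W y - W x + σ / 2 * ‖y - x‖ ^ 2 ≤ ⟪gradient W x, y - x⟫_ℝ := by
  set v := y - x with hv
  have hline : HasDerivAt (fun t : ℝ => x + t • v) v 0 := by
    simpa using ((hasDerivAt_id (0:ℝ)).smul_const v).const_add x
  have hfd : HasFDerivAt W (InnerProductSpace.toDual ℝ _ (gradient W x))
      (x + (0:ℝ) • v) := by
    simpa using hasGradientAt_iff_hasFDerivAt.mp (hdiff x).hasGradientAt
  have hcomp : HasDerivAt (fun t : ℝ => W (x + t • v)) ⟪gradient W x, v⟫_ℝ 0 := by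
    exact hfd.comp_hasDerivAt 0 hline
  rw [hasDerivAt_iff_tendsto_slope] at hcomp
  have hcomp' : Filter.Tendsto (slope (fun t : ℝ => W (x + t • v)) 0) (𝓝[>] (0:ℝ))
      (𝓝 ⟪gradient W x, v⟫_ℝ) :=
    hcomp.mono_left (nhdsWithin_mono 0 fun t ht => ne_of_gt ht)
  have hlb : Filter.Tendsto (fun t : ℝ => W y - W x + σ / 2 * (1 - t) * ‖v‖ ^ 2)
      (𝓝[>] (0:ℝ)) (𝓝 (W y - W x + σ / 2 * ‖v‖ ^ 2)) := by
    have : Continuous (fun t : ℝ => W y - W x + σ / 2 * (1 - t) * ‖v‖ ^ 2) := by continuity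
    have h0 : Filter.Tendsto (fun t : ℝ => W y - W x + σ / 2 * (1 - t) * ‖v‖ ^ 2)
        (𝓝[>] (0:ℝ)) (𝓝 (W y - W x + σ / 2 * (1 - (0:ℝ)) * ‖v‖ ^ 2)) :=
      (this.tendsto 0).mono_left nhdsWithin_le_nhds
    simpa using h0
  refine le_of_tendsto_of_tendsto hlb hcomp' ?_
  filter_upwards [Ioc_mem_nhdsGT_of_mem (Set.mem_Ico.mpr ⟨le_refl (0:ℝ), one_pos⟩),
    self_mem_nhdsWithin] with t ht ht0
  have ht0' : (0:ℝ) < t := ht0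
  have hcombo : t • y + (1 - t) • x = x + t • v := by
    rw [hv, sub_smul, one_smul, smul_sub]; abel
  have hc := hconc y hy x hx t ⟨le_of_lt ht0', ht.2⟩
  rw [hcombo] at hc
  have hnorm : ‖y - x‖ = ‖v‖ := by rw [hv]
  rw [hnorm] at hc
  have hslope : slope (fun t : ℝ => W (x + t • v)) 0 t = (W (x + t • v) - W x) / t := by
    rw [slope_def_field]; simp
  rw [hslope, le_div_iff₀ ht0']
  nlinarith [hc]

lemma sc_gap {p : ℕ} {B₁ B₂ σ : ℝ} {W : EuclideanSpace ℝ (Fin p) → ℝ}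
    (hconc : PaperStrongConcaveOn (box p B₁ B₂) σ W)
    {βstar : EuclideanSpace ℝ (Fin p)} (hβstar : βstar ∈ box p B₁ B₂)
    (hmax : ∀ b ∈ box p B₁ B₂, W b ≤ W βstar)
    {b : EuclideanSpace ℝ (Fin p)} (hb : b ∈ box p B₁ B₂) :
    σ / 2 * ‖b - βstar‖ ^ 2 ≤ W βstar - W b := by
  have hlb : Filter.Tendsto (fun t : ℝ => σ / 2 * (1 - t) * ‖b - βstar‖ ^ 2)
      (𝓝[>] (0:ℝ)) (𝓝 (σ / 2 * ‖b - βstar‖ ^ 2)) := by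
    have hcont : Continuous (fun t : ℝ => σ / 2 * (1 - t) * ‖b - βstar‖ ^ 2) := by continuity
    have h0 : Filter.Tendsto (fun t : ℝ => σ / 2 * (1 - t) * ‖b - βstar‖ ^ 2)
        (𝓝[>] (0:ℝ)) (𝓝 (σ / 2 * (1 - (0:ℝ)) * ‖b - βstar‖ ^ 2)) :=
      (hcont.tendsto 0).mono_left nhdsWithin_le_nhds
    simpa using h0
  refine le_of_tendsto hlb ?_
  filter_upwards [Ioc_mem_nhdsGT_of_mem (Set.mem_Ico.mpr ⟨le_refl (0:ℝ), one_pos⟩)] with t ht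
  have ht0 : (0:ℝ) < t := ht.1
  have htI : t ∈ Set.Icc (0:ℝ) 1 := ⟨le_of_lt ht0, ht.2⟩
  have hc := hconc b hb βstar hβstar t htI
  have hmem := box_convex B₁ B₂ hb hβstar htI
  have hle := hmax _ hmem
  nlinarith [hc, hle]

set_option maxHeartbeats 2000000 in
/-- **In-sample (cumulative) regret of projected gradient ascent (Theorem 4.3).**
Under the setup of the projected gradient ascent iterates with learning rate `η/(w+1)`,
`M ≥ η ≥ 1/σ`, and with the quadratic upper bound `W(β*) - W(β) ≤ C̄ ‖β - β*‖²` on the box,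
the cumulative regret over `T` iterations is at most `C̄ L p (1 + log T)`,
where `L = max (2(B₂-B₁)²) (G²M²)`. -/
theorem stmt4 (p : ℕ) (hp : 1 ≤ p) (B₁ B₂ : ℝ) (hB : B₁ < B₂)
    (σ G M η Cbar : ℝ) (hσ : 0 < σ) (hησ : 1 / σ ≤ η) (hηM : η ≤ M) (hCbar : 0 ≤ Cbar)
    (W : EuclideanSpace ℝ (Fin p) → ℝ)
    (hdiff : Differentiable ℝ W)
    (hconc : PaperStrongConcaveOn (box p B₁ B₂) σ W)
    (hG : ∀ x ∈ box p B₁ B₂, ∀ i, |gradient W x i| ≤ G)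
    (βstar : EuclideanSpace ℝ (Fin p)) (hβstar : βstar ∈ box p B₁ B₂)
    (hmax : ∀ b ∈ box p B₁ B₂, W b ≤ W βstar)
    (hquad : ∀ b ∈ box p B₁ B₂, W βstar - W b ≤ Cbar * ‖b - βstar‖ ^ 2)
    (β : ℕ → EuclideanSpace ℝ (Fin p)) (hβ1 : β 1 ∈ box p B₁ B₂)
    (hrec : ∀ w : ℕ, 1 ≤ w →
      β (w + 1) = boxProj p B₁ B₂ (β w + (η / ((w : ℝ) + 1)) • gradient W (β w))) :
    ∀ T : ℕ, 1 ≤ T →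
      ∑ w ∈ Finset.Icc 1 T, (W βstar - W (β w))
        ≤ Cbar * max (2 * (B₂ - B₁) ^ 2) (G ^ 2 * M ^ 2) * p * (1 + Real.log T) := by
  set L := max (2 * (B₂ - B₁) ^ 2) (G ^ 2 * M ^ 2) with hLdef
  have hBle : B₁ ≤ B₂ := le_of_lt hB
  have hL0 : 0 < L := lt_of_lt_of_le (by nlinarith) (le_max_left _ _)
  have hML : G ^ 2 * M ^ 2 ≤ L := le_max_right _ _
  have hG0 : 0 ≤ G := le_trans (abs_nonneg _) (hG (β 1) hβ1 ⟨0, hp⟩)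
  have hη0 : 0 < η := lt_of_lt_of_le (by positivity) hησ
  have hσential : 1 ≤ σ * η := by
    rw [div_le_iff₀ hσ] at hησ; linarith
  have hp0 : (0:ℝ) < p := by exact_mod_cast hp
  -- key invariant
  have key : ∀ w : ℕ, 1 ≤ w → β w ∈ box p B₁ B₂ ∧ ‖β w - βstar‖ ^ 2 ≤ L * p / w := by
    intro w hw
    induction w, hw using Nat.le_induction with
    | base =>
      rw [Nat.cast_one]
      refine ⟨hβ1, ?_⟩
      have h1 : ∀ i, |(β 1 - βstar) i| ≤ B₂ - B₁ := by
        intro i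
        have ha := hβ1 i; have hb := hβstar i
        have hsub : (β 1 - βstar) i = β 1 i - βstar i := rfl
        rw [hsub, abs_le]
        exact ⟨by linarith [ha.1, hb.2], by linarith [ha.2, hb.1]⟩
      calc ‖β 1 - βstar‖ ^ 2 ≤ p * (B₂ - B₁) ^ 2 := norm_sq_le_coord _ _ h1
        _ ≤ L * p / 1 := by
            have h2 : 2 * (B₂ - B₁) ^ 2 ≤ L := le_max_left _ _
            nlinarith [sq_nonneg (B₂ - B₁)]
    | succ w hw ih =>
      obtain ⟨hbw, hDw⟩ := ih
      set g := gradient W (β w) with hg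
      set c := η / ((w : ℝ) + 1) with hc
      have hw1 : (0:ℝ) < (w:ℝ) + 1 := by positivity
      have hk1 : (1:ℝ) ≤ (w:ℝ) := by exact_mod_cast hw
      have hw0 : (0:ℝ) < (w:ℝ) := by linarith
      have hc0 : 0 < c := by positivity
      have hrec' := hrec w hw
      have hmem : β (w + 1) ∈ box p B₁ B₂ := by
        rw [hrec']; exact boxProj_mem B₁ B₂ hBle _
      refine ⟨hmem, ?_⟩
      have hne : ‖β (w + 1) - βstar‖ ≤ ‖β w + c • g - βstar‖ := by
        rw [hrec']; exact boxProj_nonexpansive B₁ B₂ hBle _ _ hβstar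
      have hexp : ‖β w + c • g - βstar‖ ^ 2
          = ‖β w - βstar‖ ^ 2 + 2 * (c * ⟪β w - βstar, g⟫_ℝ) + c ^ 2 * ‖g‖ ^ 2 := by
        have hrw : β w + c • g - βstar = (β w - βstar) + c • g := by abel
        rw [hrw, norm_add_sq_real, real_inner_smul_right, norm_smul,
          Real.norm_eq_abs, mul_pow, sq_abs]
      -- inner product bound
      have hgi := sc_grad hdiff hconc hbw hβstar
      have hgap := sc_gap hconc hβstar hmax hbw
      have hnormrev : ‖βstar - β w‖ = ‖β w - βstar‖ := norm_sub_rev _ _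
      have hinner2 : σ * ‖β w - βstar‖ ^ 2 ≤ ⟪g, βstar - β w⟫_ℝ := by
        rw [hnormrev] at hgi; linarith
      have hginner : ⟪β w - βstar, g⟫_ℝ ≤ -(σ * ‖β w - βstar‖ ^ 2) := by
        have hflip : ⟪g, βstar - β w⟫_ℝ = -⟪β w - βstar, g⟫_ℝ := by
          rw [show βstar - β w = -(β w - βstar) by abel, inner_neg_right, real_inner_comm]
        rw [hflip] at hinner2; linarith
      have hgn : ‖g‖ ^ 2 ≤ p * G ^ 2 := norm_sq_le_coord _ _ (fun i => hG (β w) hbw i)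
      -- arithmetic
      have hAle : 1 - 2 * σ * c ≤ ((w:ℝ) - 1) / ((w:ℝ) + 1) := by
        rw [hc, ← sub_nonneg]
        have hrw2 : ((w:ℝ) - 1) / ((w:ℝ) + 1) - (1 - 2 * σ * (η / ((w:ℝ) + 1)))
            = (2 * (σ * η) - 2) / ((w:ℝ) + 1) := by
          field_simp
          ring
        rw [hrw2]
        apply div_nonneg (by linarith) hw1.le
      have hAD : (1 - 2 * σ * c) * ‖β w - βstar‖ ^ 2
          ≤ (((w:ℝ) - 1) / ((w:ℝ) + 1)) * (L * p / w) := by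
        rcases le_or_gt 0 (1 - 2 * σ * c) with h | h
        · have hq : (0:ℝ) ≤ ((w:ℝ) - 1) / ((w:ℝ) + 1) := div_nonneg (by linarith) hw1.le
          exact mul_le_mul hAle hDw (sq_nonneg _) hq
        · have h1 : (1 - 2 * σ * c) * ‖β w - βstar‖ ^ 2 ≤ 0 :=
            mul_nonpos_of_nonpos_of_nonneg (le_of_lt h) (sq_nonneg _)
          have h2 : (0:ℝ) ≤ (((w:ℝ) - 1) / ((w:ℝ) + 1)) * (L * p / w) :=
            mul_nonneg (div_nonneg (by linarith) hw1.le)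
              (div_nonneg (mul_nonneg hL0.le hp0.le) hw0.le)
          linarith
      have hcsq : c ^ 2 * (p * G ^ 2) ≤ M ^ 2 * G ^ 2 * p / ((w:ℝ) + 1) ^ 2 := by
        have hcM : c ≤ M / ((w:ℝ) + 1) := by rw [hc]; gcongr
        have hcsq' : c ^ 2 ≤ M ^ 2 / ((w:ℝ) + 1) ^ 2 := by
          calc c ^ 2 ≤ (M / ((w:ℝ) + 1)) ^ 2 := pow_le_pow_left₀ hc0.le hcM 2
            _ = M ^ 2 / ((w:ℝ) + 1) ^ 2 := by rw [div_pow]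
        calc c ^ 2 * (p * G ^ 2) ≤ M ^ 2 / ((w:ℝ) + 1) ^ 2 * (p * G ^ 2) := by
              apply mul_le_mul_of_nonneg_right hcsq' (by positivity)
          _ = M ^ 2 * G ^ 2 * p / ((w:ℝ) + 1) ^ 2 := by ring
      have hfin : (((w:ℝ) - 1) / ((w:ℝ) + 1)) * (L * p / w) + M ^ 2 * G ^ 2 * p / ((w:ℝ) + 1) ^ 2
          ≤ L * p / ((w:ℝ) + 1) := by
        rw [← sub_nonneg]
        have heq : L * p / ((w:ℝ) + 1)
            - ((((w:ℝ) - 1) / ((w:ℝ) + 1)) * (L * p / w) + M ^ 2 * G ^ 2 * p / ((w:ℝ) + 1) ^ 2)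
            = p * (L * ((w:ℝ) + 1) - G ^ 2 * M ^ 2 * (w:ℝ)) / ((w:ℝ) * ((w:ℝ) + 1) ^ 2) := by
          field_simp
          ring
        rw [heq]
        apply div_nonneg _ (by positivity)
        apply mul_nonneg (le_of_lt hp0)
        nlinarith [mul_le_mul_of_nonneg_right hML hw0.le, hL0.le]
      have hcast : ((w + 1 : ℕ) : ℝ) = (w:ℝ) + 1 := by push_cast; ring
      rw [hcast]
      calc ‖β (w + 1) - βstar‖ ^ 2 ≤ ‖β w + c • g - βstar‖ ^ 2 :=
            pow_le_pow_left₀ (norm_nonneg _) hne 2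
        _ = ‖β w - βstar‖ ^ 2 + 2 * (c * ⟪β w - βstar, g⟫_ℝ) + c ^ 2 * ‖g‖ ^ 2 := hexp
        _ ≤ (1 - 2 * σ * c) * ‖β w - βstar‖ ^ 2 + c ^ 2 * (p * G ^ 2) := by
            nlinarith [hginner, hgn, hc0, sq_nonneg c]
        _ ≤ (((w:ℝ) - 1) / ((w:ℝ) + 1)) * (L * p / w) + M ^ 2 * G ^ 2 * p / ((w:ℝ) + 1) ^ 2 :=
            add_le_add hAD hcsq
        _ ≤ L * p / ((w:ℝ) + 1) := hfin
  -- sum up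
  intro T hT
  have hterm : ∀ w ∈ Finset.Icc 1 T, W βstar - W (β w) ≤ Cbar * L * p * (1 / (w:ℝ)) := by
    intro w hw
    obtain ⟨hbw, hDw⟩ := key w (Finset.mem_Icc.mp hw).1
    calc W βstar - W (β w) ≤ Cbar * ‖β w - βstar‖ ^ 2 := hquad _ hbw
      _ ≤ Cbar * (L * p / w) := mul_le_mul_of_nonneg_left hDw hCbar
      _ = Cbar * L * p * (1 / (w:ℝ)) := by ring
  have hnn : 0 ≤ Cbar * L * p := by positivity
  calc ∑ w ∈ Finset.Icc 1 T, (W βstar - W (β w))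
      ≤ ∑ w ∈ Finset.Icc 1 T, Cbar * L * p * (1 / (w:ℝ)) := Finset.sum_le_sum hterm
    _ = Cbar * L * p * ∑ w ∈ Finset.Icc 1 T, (1 / (w:ℝ)) := by rw [← Finset.mul_sum]
    _ ≤ Cbar * L * p * (1 + Real.log T) :=
        mul_le_mul_of_nonneg_left (harm_le_log T hT) hnn
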